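/- Let A be an algebraically closed field, V ⊆ A^m an affine variety not containing the origin O, π: A^m → A^{k+1} a surjective linear map with kernel W, V_c and W_c the projective closures of V and W in P^m. If V_c ∩ W_c = ∅, then the origin O' of A^{k+1} does not lie in the Zariski closure of π(V). -/

import Mathlib

open MvPolynomial

variable {A : Type*} [Field A] {m : ℕ}

/-- `S ⊆ A^d` is Zariski closed. -/
def IsZClosed {d : ℕ} (S : Set (Fin d → A)) : Prop :=
  ∃ T : Set (MvPolynomial (Fin d) A), S = {x | ∀ p ∈ T, eval x p = 0}

/-- The Zariski closure of `S ⊆ A^d`. -/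
def zClosure {d : ℕ} (S : Set (Fin d → A)) : Set (Fin d → A) :=
  {x | ∀ p : MvPolynomial (Fin d) A, (∀ y ∈ S, eval y p = 0) → eval x p = 0}

/-- An affine variety: irreducible Zariski closed set. -/
def IsZVariety {d : ℕ} (S : Set (Fin d → A)) : Prop :=
  IsZClosed S ∧ S.Nonempty ∧ ∀ C₁ C₂ : Set (Fin d → A), IsZClosed C₁ → IsZClosed C₂ →
    S ⊆ C₁ ∪ C₂ → S ⊆ C₁ ∨ S ⊆ C₂

/-- Projective `m`-space over `A`. -/
abbrev ProjSpace (A : Type*) [Field A] (m : ℕ) :=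
  Projectivization A (Fin (m + 1) → A)

/-- A Zariski closed subset of `P^m`: common zero set of homogeneous polynomials. -/
def IsPClosed (S : Set (ProjSpace A m)) : Prop :=
  ∃ T : Set (MvPolynomial (Fin (m + 1)) A),
    (∀ p ∈ T, ∃ k, p.IsHomogeneous k) ∧
    S = {x | ∀ p ∈ T, ∀ v : Fin (m + 1) → A, (∃ hv : v ≠ 0, Projectivization.mk A v hv = x) →
      eval v p = 0}

/-- Embedding `A^m ⊆ P^m`, `x ↦ (1 : x)`. -/
noncomputable def affToProj (x : Fin m → A) : ProjSpace A m :=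
  Projectivization.mk A (Fin.cons 1 x) (by
    intro h
    have := congrFun h 0
    simp at this)

/-- The projective closure of a subset of `A^m` in `P^m`. -/
def projClosure (S : Set (Fin m → A)) : Set (ProjSpace A m) :=
  ⋂₀ {C : Set (ProjSpace A m) | IsPClosed C ∧ affToProj '' S ⊆ C}

set_option linter.unusedSectionVars false

lemma eval_smul_homog {σ : Type*} {p : MvPolynomial σ A} {n : ℕ}
    (hp : p.IsHomogeneous n) (c : A) (x : σ → A) :
    eval (c • x) p = c ^ n * eval x p := by
  rw [eval_eq, eval_eq, Finset.mul_sum]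
  apply Finset.sum_congr rfl
  intro d hd
  have hdeg : d.degree = n := by
    by_contra h
    exact (mem_support_iff.mp hd) (hp.coeff_eq_zero h)
  rw [← hdeg]
  simp only [Pi.smul_apply, smul_eq_mul, mul_pow]
  rw [Finset.prod_mul_distrib, Finset.prod_pow_eq_pow_sum]
  unfold Finsupp.degree
  change _ = c ^ (∑ i ∈ d.support, d i) * _
  ring

/-- homogeneous polynomials vanishing on the affine cone over `S` at level `x₀ = 1`. -/
def homogOf (S : Set (Fin m → A)) : Set (MvPolynomial (Fin (m+1)) A) :=
  {p | (∃ n, p.IsHomogeneous n) ∧ ∀ v ∈ S, eval (Fin.cons 1 v) p = 0}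

lemma mem_projClosure_of {S : Set (Fin m → A)} {u : Fin (m+1) → A} (hu : u ≠ 0)
    (h : ∀ p ∈ homogOf S, eval u p = 0) :
    Projectivization.mk A u hu ∈ projClosure S := by
  intro C hC
  obtain ⟨⟨T, hThom, rfl⟩, hCS⟩ := hC
  intro p hp v hv
  obtain ⟨hv0, hveq⟩ := hv
  -- p vanishes on u
  have hpu : eval u p = 0 := by
    apply h
    refine ⟨hThom p hp, fun w hw => ?_⟩
    have := hCS ⟨w, hw, rfl⟩
    exact this p hp (Fin.cons 1 w)
      ⟨fun h0 => by have := congrFun h0 0; simp at this, rfl⟩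
  -- v is a scalar multiple of u
  obtain ⟨n, hn⟩ := hThom p hp
  obtain ⟨a, ha⟩ := (Projectivization.mk_eq_mk_iff' A v u hv0 hu).mp hveq
  rw [← ha, eval_smul_homog hn, hpu, mul_zero]

lemma eval_eq_zero_of_homogOf_smulclosed [IsAlgClosed A] {S : Set (Fin m → A)}
    (hS : ∀ (c : A), ∀ x ∈ S, c • x ∈ S)
    {p : MvPolynomial (Fin (m+1)) A} (hp : p ∈ homogOf S)
    {u : Fin (m+1) → A} (hu : Fin.tail u ∈ S) :
    eval u p = 0 := by
  obtain ⟨⟨n, hn⟩, hvan⟩ := hp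
  set x := Fin.tail u with hx
  -- the one-variable polynomial s ↦ eval (Fin.cons s x) p
  set Q : Polynomial A :=
    MvPolynomial.eval₂ Polynomial.C (Fin.cons Polynomial.X fun j => Polynomial.C (x j)) p with hQ
  have hev : ∀ s : A, Q.eval s = eval (Fin.cons s x) p := by
    intro s
    rw [hQ]
    rw [show (Polynomial.eval s : Polynomial A → A) = (Polynomial.evalRingHom s : Polynomial A →+* A) from rfl]
    rw [eval₂_comp_left (Polynomial.evalRingHom s) Polynomial.C _ p]
    have h1 : (Polynomial.evalRingHom s).comp Polynomial.C = RingHom.id A := by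
      ext a; simp
    have h2 : (Polynomial.evalRingHom s) ∘ (Fin.cons Polynomial.X fun j => Polynomial.C (x j))
        = Fin.cons s x := by
      funext i
      refine Fin.cases ?_ (fun j => ?_) i <;> simp
    rw [h1, h2]
    rfl
  have hroot : ∀ s : A, s ≠ 0 → Q.eval s = 0 := by
    intro s hs
    rw [hev]
    have hcons : Fin.cons s x = s • (Fin.cons (1:A) (s⁻¹ • x) : Fin (m+1) → A) := by
      funext i
      refine Fin.cases ?_ (fun j => ?_) i
      · simp
      · simp only [Fin.cons_succ, Pi.smul_apply, smul_eq_mul]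
        field_simp
    rw [hcons, eval_smul_homog hn, hvan _ (hS s⁻¹ x hu), mul_zero]
  have hQ0 : Q = 0 := by
    apply Polynomial.eq_zero_of_infinite_isRoot
    apply Set.Infinite.mono (s := {s : A | s ≠ 0})
    · intro s hs
      exact hroot s hs
    · exact Set.Finite.infinite_compl (Set.finite_singleton 0)
  have := hev (u 0)
  rw [hQ0] at this
  simp only [Polynomial.eval_zero] at this
  rw [show u = Fin.cons (u 0) x from (Fin.cons_self_tail u).symm]
  exact this.symm

section pi
variable {k : ℕ} (π : (Fin m → A) →ₗ[A] (Fin (k + 1) → A))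

/-- coordinates of `π` as linear polynomials in `m` variables -/
noncomputable def piPoly (i : Fin (k+1)) : MvPolynomial (Fin m) A :=
  ∑ j, C (π (fun l => if j = l then 1 else 0) i) * X j

lemma eval_piPoly (v : Fin m → A) (i : Fin (k+1)) :
    eval v (piPoly π i) = π v i := by
  rw [LinearMap.pi_apply_eq_sum_univ π v]
  unfold piPoly
  rw [map_sum, Finset.sum_apply]
  apply Finset.sum_congr rfl
  intro j _
  simp [mul_comm]

lemma piPoly_homog (i : Fin (k+1)) : (piPoly π i).IsHomogeneous 1 := by
  unfold piPoly
  apply MvPolynomial.IsHomogeneous.sum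
  intro j _
  simpa using (isHomogeneous_C (Fin m) (π (fun l => if j = l then 1 else 0) i)).mul
    (isHomogeneous_X A j)

/-- the homogeneous versions in `m+1` variables (not involving `x₀`) -/
noncomputable def piHomog (i : Fin (k+1)) : MvPolynomial (Fin (m+1)) A :=
  rename Fin.succ (piPoly π i)

lemma eval_piHomog (u : Fin (m+1) → A) (i : Fin (k+1)) :
    eval u (piHomog π i) = π (Fin.tail u) i := by
  unfold piHomog
  rw [eval_rename, ← eval_piPoly]
  rfl

lemma piHomog_homog (i : Fin (k+1)) : (piHomog π i).IsHomogeneous 1 :=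
  (piPoly_homog π i).rename_isHomogeneous

end pi

section hc
variable {σ : Type*}

lemma hc_mul_homog (r t : MvPolynomial σ A) {d n : ℕ} (ht : t.IsHomogeneous d) (hdn : d ≤ n) :
    homogeneousComponent n (r * t) = homogeneousComponent (n - d) r * t := by
  conv_lhs => rw [← sum_homogeneousComponent r]
  rw [Finset.sum_mul, map_sum]
  have key : ∀ e, homogeneousComponent n (homogeneousComponent e r * t)
      = if n = e + d then homogeneousComponent e r * t else 0 := fun e =>
    homogeneousComponent_of_mem ((mem_homogeneousSubmodule _ _).mpr
      ((homogeneousComponent_isHomogeneous e r).mul ht))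
  simp only [key]
  rw [Finset.sum_eq_single (n - d)]
  · rw [if_pos (by omega)]
  · intro e _ hne
    rw [if_neg (by omega)]
  · intro hnot
    rw [Finset.mem_range, not_lt] at hnot
    rw [if_pos (by omega)]
    have : (homogeneousComponent (n - d)) r = 0 :=
      homogeneousComponent_eq_zero _ r (by omega)
    rw [this, zero_mul]

end hc

lemma hc_mul_homog' {σ : Type*} (r t : MvPolynomial σ A) {d n : ℕ} (ht : t.IsHomogeneous d) :
    homogeneousComponent n (r * t)
      = if d ≤ n then homogeneousComponent (n - d) r * t else 0 := by
  by_cases hdn : d ≤ n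
  · rw [if_pos hdn, hc_mul_homog r t ht hdn]
  · rw [if_neg hdn]
    conv_lhs => rw [← sum_homogeneousComponent r]
    rw [Finset.sum_mul, map_sum]
    apply Finset.sum_eq_zero
    intro e _
    rw [homogeneousComponent_of_mem ((mem_homogeneousSubmodule _ _).mpr
      ((homogeneousComponent_isHomogeneous e r).mul ht)), if_neg (by omega)]

lemma hc_mem_span {σ : Type*} {s : Set (MvPolynomial σ A)}
    (hs : ∀ p ∈ s, ∃ d, p.IsHomogeneous d) {a : MvPolynomial σ A}
    (ha : a ∈ Ideal.span s) (N : ℕ) : homogeneousComponent N a ∈ Ideal.span s := by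
  rw [Ideal.span, ← Submodule.span_eq (Submodule.span _ s)] at ha
  obtain ⟨c, hsupp, rfl⟩ := Submodule.mem_span_set.mp (by simpa using ha)
  rw [Finsupp.sum, map_sum]
  apply Ideal.sum_mem
  intro i hi
  obtain ⟨d, hd⟩ := hs i (hsupp hi)
  rw [smul_eq_mul, hc_mul_homog' _ _ hd]
  split
  · exact Ideal.mul_mem_left _ _ (Ideal.subset_span (hsupp hi))
  · exact Ideal.zero_mem _


lemma eval_aeval' {σ τ : Type*} (v : τ → A) (g : σ → MvPolynomial τ A)
    (f : MvPolynomial σ A) :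
    eval v (aeval g f) = eval (fun i => eval v (g i)) f := by
  show (eval v) ((aeval g) f) = _
  rw [aeval_def, eval₂_comp_left (eval v) (algebraMap A _) g f]
  congr 1
  · ext a
    simp

/-- dehomogenization: substitute `x₀ = 1`. -/
noncomputable def dehom : MvPolynomial (Fin (m+1)) A →ₐ[A] MvPolynomial (Fin m) A :=
  aeval (Fin.cons 1 X)

lemma dehom_totalDegree_le (q : MvPolynomial (Fin (m+1)) A) :
    (dehom (A := A) (m := m) q).totalDegree ≤ q.totalDegree := by
  conv_lhs => rw [q.as_sum]
  rw [map_sum]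
  refine le_trans (totalDegree_finset_sum _ _) (Finset.sup_le ?_)
  intro d hd
  have : (dehom (A := A) (m := m)) (monomial d (coeff d q))
      = C (coeff d q) * ∏ i ∈ d.support, (Fin.cons 1 X : Fin (m+1) → MvPolynomial (Fin m) A) i ^ d i := by
    unfold dehom
    rw [aeval_monomial]
    rfl
  rw [this]
  refine le_trans (totalDegree_mul _ _) ?_
  rw [totalDegree_C, zero_add]
  refine le_trans (totalDegree_finset_prod _ _) ?_
  refine le_trans ?_ (le_totalDegree hd)
  show _ ≤ d.sum fun _ e => e
  rw [Finsupp.sum]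
  apply Finset.sum_le_sum
  intro i _
  refine le_trans (totalDegree_pow _ _) ?_
  refine Fin.cases ?_ (fun j => ?_) i
  · simp
  · simp [totalDegree_X]

lemma eval_dehom (v : Fin m → A) (q : MvPolynomial (Fin (m+1)) A) :
    eval v (dehom (A := A) q) = eval (Fin.cons 1 v) q := by
  unfold dehom
  rw [eval_aeval']
  have : (fun i => eval v ((Fin.cons 1 X : Fin (m+1) → MvPolynomial (Fin m) A) i))
      = Fin.cons 1 v := by
    funext i
    refine Fin.cases ?_ (fun j => ?_) i <;> simp
  rw [this]

section main
variable [IsAlgClosed A] {k : ℕ}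

lemma zeroLocus_bigSet (V : Set (Fin m → A)) (π : (Fin m → A) →ₗ[A] (Fin (k + 1) → A))
    (hdisj : projClosure V ∩ projClosure (LinearMap.ker π : Set (Fin m → A)) = ∅)
    (u : Fin (m+1) → A)
    (hu : ∀ p ∈ homogOf V ∪ Set.range (piHomog π), eval u p = 0) : u = 0 := by
  by_contra h0
  have h1 : Projectivization.mk A u h0 ∈ projClosure V :=
    mem_projClosure_of h0 (fun p hp => hu p (Or.inl hp))
  have hker : Fin.tail u ∈ (LinearMap.ker π : Set (Fin m → A)) := by
    show π (Fin.tail u) = 0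
    funext i
    rw [← eval_piHomog π u i, hu (piHomog π i) (Or.inr ⟨i, rfl⟩)]
    rfl
  have hsmul : ∀ (c : A), ∀ x ∈ (LinearMap.ker π : Set (Fin m → A)), c • x ∈
      (LinearMap.ker π : Set (Fin m → A)) := by
    intro c x hx
    exact Submodule.smul_mem _ c hx
  have h2 : Projectivization.mk A u h0
      ∈ projClosure (LinearMap.ker π : Set (Fin m → A)) := by
    apply mem_projClosure_of h0
    intro p hp
    exact eval_eq_zero_of_homogOf_smulclosed hsmul hp hker
  have : Projectivization.mk A u h0 ∈ (∅ : Set (Projectivization A (Fin (m+1) → A))) := by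
    rw [← hdisj]; exact ⟨h1, h2⟩
  exact this

lemma powMem (V : Set (Fin m → A)) (π : (Fin m → A) →ₗ[A] (Fin (k + 1) → A))
    (hdisj : projClosure V ∩ projClosure (LinearMap.ker π : Set (Fin m → A)) = ∅)
    (j : Fin (m+1)) :
    ∃ n, (X j : MvPolynomial (Fin (m+1)) A) ^ (n+1)
      ∈ Ideal.span (homogOf V ∪ Set.range (piHomog π)) := by
  set G := homogOf V ∪ Set.range (piHomog π)
  have hXj : (X j : MvPolynomial (Fin (m+1)) A)
      ∈ vanishingIdeal A (zeroLocus A (Ideal.span G)) := by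
    rw [mem_vanishingIdeal_iff]
    intro x hx
    have hx0 : x = 0 := by
      apply zeroLocus_bigSet V π hdisj
      intro p hp
      exact (mem_zeroLocus_iff.mp hx) p (Ideal.subset_span hp)
    rw [hx0]
    simp
  rw [vanishingIdeal_zeroLocus_eq_radical] at hXj
  obtain ⟨n, hn⟩ := hXj
  exact ⟨n, by rw [pow_succ]; exact Ideal.mul_mem_right _ _ hn⟩

lemma dehom_piHomog (π : (Fin m → A) →ₗ[A] (Fin (k + 1) → A)) (i : Fin (k+1)) :
    dehom (A := A) (piHomog π i) = piPoly π i := by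
  unfold dehom piHomog
  rw [aeval_rename]
  have : (Fin.cons 1 X : Fin (m+1) → MvPolynomial (Fin m) A) ∘ Fin.succ = X := by
    funext j; simp
  rw [this, aeval_X_left_apply]

lemma span_homogOf_dehom (V : Set (Fin m → A)) {x : MvPolynomial (Fin (m+1)) A}
    (hx : x ∈ Ideal.span (homogOf V)) : dehom (A := A) x ∈ vanishingIdeal A V := by
  have hle : Ideal.span (homogOf V)
      ≤ Ideal.comap (dehom (A := A) (m := m)).toRingHom (vanishingIdeal A V) := by
    rw [Ideal.span_le]
    intro p hp
    show dehom (A := A) p ∈ vanishingIdeal A V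
    rw [mem_vanishingIdeal_iff]
    intro v hv
    rw [aeval_eq_eval, eval_dehom]
    exact hp.2 v hv
  exact hle hx

lemma relation (V : Set (Fin m → A)) (π : (Fin m → A) →ₗ[A] (Fin (k + 1) → A))
    (hdisj : projClosure V ∩ projClosure (LinearMap.ker π : Set (Fin m → A)) = ∅)
    (j : Fin m) :
    ∃ (n : ℕ) (c : Fin (k+1) → MvPolynomial (Fin m) A),
      (∀ i, (c i).totalDegree ≤ n) ∧
      (X j : MvPolynomial (Fin m) A) ^ (n+1) - ∑ i, c i * piPoly π i
        ∈ vanishingIdeal A V := by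
  obtain ⟨n, hn⟩ := powMem V π hdisj (Fin.succ j)
  rw [Ideal.span_union, Submodule.mem_sup] at hn
  obtain ⟨a, ha, b, hb, hab⟩ := hn
  rw [Ideal.mem_span_range_iff_exists_fun] at hb
  obtain ⟨c', hc'⟩ := hb
  have hXpow : ((X (Fin.succ j) : MvPolynomial (Fin (m+1)) A) ^ (n+1)).IsHomogeneous (n+1) := by
    simpa using (isHomogeneous_X A (Fin.succ j)).pow (n+1)
  have heq : (X (Fin.succ j) : MvPolynomial (Fin (m+1)) A) ^ (n+1)
      = homogeneousComponent (n+1) a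
        + ∑ i, homogeneousComponent n (c' i) * piHomog π i := by
    have h1 := congrArg (fun z => homogeneousComponent (n+1) z) hab
    rw [homogeneousComponent_of_mem ((mem_homogeneousSubmodule _ _).mpr hXpow), if_pos rfl]
      at h1
    rw [← h1, map_add, ← hc', map_sum]
    congr 1
    apply Finset.sum_congr rfl
    intro i _
    rw [hc_mul_homog _ _ (piHomog_homog π i) (by omega)]
    norm_num
  -- dehomogenize
  refine ⟨n, fun i => dehom (A := A) (homogeneousComponent n (c' i)), fun i => ?_, ?_⟩
  · exact le_trans (dehom_totalDegree_le _)
      ((homogeneousComponent_isHomogeneous n (c' i)).totalDegree_le)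
  · have h2 := congrArg (fun z => dehom (A := A) z) heq
    simp only [map_add, map_sum, map_mul, map_pow] at h2
    rw [show dehom (A := A) (X (Fin.succ j)) = (X j : MvPolynomial (Fin m) A) by
      unfold dehom; rw [aeval_X]; simp] at h2
    simp only [dehom_piHomog] at h2
    have : (X j : MvPolynomial (Fin m) A) ^ (n+1)
        - ∑ i, dehom (A := A) (homogeneousComponent n (c' i)) * piPoly π i
        = dehom (A := A) (homogeneousComponent (n+1) a) := by
      rw [h2]; ring
    rw [this]
    exact span_homogOf_dehom V (hc_mem_span (fun p hp => hp.1) ha _)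

end main

set_option maxHeartbeats 1000000 in
theorem main_thm [IsAlgClosed A] {k : ℕ}
    (V : Set (Fin m → A))
    (hVc : ∃ T : Set (MvPolynomial (Fin m) A), V = {x | ∀ p ∈ T, eval x p = 0})
    (π : (Fin m → A) →ₗ[A] (Fin (k + 1) → A))
    (hdisj : projClosure V ∩ projClosure (LinearMap.ker π : Set (Fin m → A)) = ∅) :
    (0 : Fin (k + 1) → A) ∉ zClosure (π '' V) := by
  intro h0
  classical
  -- affine disjointness
  have haff : ∀ v ∈ V, π v ≠ 0 := by
    intro v hv hker
    have h1 : affToProj v ∈ projClosure V := fun C hC => hC.2 ⟨v, hv, rfl⟩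
    have h2 : affToProj v ∈ projClosure (LinearMap.ker π : Set (Fin m → A)) :=
      fun C hC => hC.2 ⟨v, hker, rfl⟩
    have : affToProj v ∈ (∅ : Set (Projectivization A (Fin (m+1) → A))) := by
      rw [← hdisj]; exact ⟨h1, h2⟩
    exact this
  set I : Ideal (MvPolynomial (Fin m) A) := vanishingIdeal A V with hIdef
  let φ : MvPolynomial (Fin (k+1)) A →+* MvPolynomial (Fin m) A ⧸ I :=
    (Ideal.Quotient.mk I).comp (aeval (piPoly π)).toRingHom
  letI : Algebra (MvPolynomial (Fin (k+1)) A) (MvPolynomial (Fin m) A ⧸ I) := φ.toAlgebra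
  have halgmap : algebraMap (MvPolynomial (Fin (k+1)) A) (MvPolynomial (Fin m) A ⧸ I) = φ :=
    rfl
  letI : Module (MvPolynomial (Fin (k+1)) A) (MvPolynomial (Fin m) A ⧸ I) := Algebra.toModule
  choose nn cc hdeg hrel using relation V π hdisj
  -- finite generating set
  let gens : Finset (MvPolynomial (Fin m) A ⧸ I) :=
    (Fintype.piFinset fun j : Fin m => Finset.range (nn j + 1)).image
      fun e => Ideal.Quotient.mk I (∏ j, (X j : MvPolynomial (Fin m) A) ^ e j)
  set M := Submodule.span (MvPolynomial (Fin (k+1)) A) (gens : Set (MvPolynomial (Fin m) A ⧸ I))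
    with hM
  have hXsmul : ∀ (i : Fin (k+1)) (y : MvPolynomial (Fin m) A ⧸ I),
      Ideal.Quotient.mk I (piPoly π i) * y = (X i : MvPolynomial (Fin (k+1)) A) • y := by
    intro i y
    rw [Algebra.smul_def, halgmap]
    show _ = ((Ideal.Quotient.mk I) (aeval (piPoly π) (X i))) * y
    rw [aeval_X]
  have hCsmul : ∀ (a : A) (y : MvPolynomial (Fin m) A ⧸ I),
      Ideal.Quotient.mk I (C a) * y = (C a : MvPolynomial (Fin (k+1)) A) • y := by
    intro a y
    rw [Algebra.smul_def, halgmap]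
    show _ = ((Ideal.Quotient.mk I) (aeval (piPoly π) (C a))) * y
    rw [aeval_C]
    rfl
  have key : ∀ (N : ℕ) (q : MvPolynomial (Fin m) A), q.totalDegree ≤ N →
      Ideal.Quotient.mk I q ∈ M := by
    intro N
    induction N using Nat.strong_induction_on with
    | _ N IH =>
      have mono : ∀ e : Fin m → ℕ, (∑ j, e j) ≤ N →
          Ideal.Quotient.mk I (∏ j, (X j : MvPolynomial (Fin m) A) ^ e j) ∈ M := by
        intro e he
        by_cases hsmall : ∀ j, e j ≤ nn j
        · apply Submodule.subset_span
          refine Finset.mem_coe.mpr (Finset.mem_image.mpr ⟨e, ?_, rfl⟩)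
          rw [Fintype.mem_piFinset]
          intro j
          rw [Finset.mem_range]
          exact Nat.lt_succ_of_le (hsmall j)
        · push_neg at hsmall
          obtain ⟨j0, hj0⟩ := hsmall
          set e' : Fin m → ℕ := Function.update e j0 (e j0 - (nn j0 + 1)) with he'
          have hpt : ∀ j, e j = e' j + (if j = j0 then nn j0 + 1 else 0) := by
            intro j
            by_cases hj : j = j0
            · subst hj; rw [if_pos rfl, he', Function.update_self]; omega
            · rw [if_neg hj, he', Function.update_of_ne hj, add_zero]
          have hsum' : (∑ j, e' j) + (nn j0 + 1) = ∑ j, e j := by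
            have : ∑ j, e j = (∑ j, e' j) + ∑ j, (if j = j0 then nn j0 + 1 else 0) := by
              rw [← Finset.sum_add_distrib]
              exact Finset.sum_congr rfl fun j _ => hpt j
            rw [this, Finset.sum_ite_eq' Finset.univ j0 (fun _ => nn j0 + 1),
              if_pos (Finset.mem_univ _)]
          have hsplit : (∏ j, (X j : MvPolynomial (Fin m) A) ^ e j)
              = (∏ j, (X j : MvPolynomial (Fin m) A) ^ e' j) * X j0 ^ (nn j0 + 1) := by
            have h1 : ∀ j, (X j : MvPolynomial (Fin m) A) ^ e j
                = X j ^ e' j * (if j = j0 then X j ^ (nn j0 + 1) else 1) := by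
              intro j
              conv_lhs => rw [hpt j, pow_add]
              congr 1
              by_cases hj : j = j0
              · rw [if_pos hj, if_pos hj]
              · rw [if_neg hj, if_neg hj, pow_zero]
            calc (∏ j, (X j : MvPolynomial (Fin m) A) ^ e j)
                = ∏ j, ((X j : MvPolynomial (Fin m) A) ^ e' j
                    * (if j = j0 then X j ^ (nn j0 + 1) else 1)) :=
                  Finset.prod_congr rfl fun j _ => h1 j
              _ = (∏ j, (X j : MvPolynomial (Fin m) A) ^ e' j)
                    * ∏ j, (if j = j0 then (X j : MvPolynomial (Fin m) A) ^ (nn j0 + 1) else 1) :=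
                  Finset.prod_mul_distrib
              _ = _ := by
                  rw [Finset.prod_ite_eq' Finset.univ j0
                    (fun j => (X j : MvPolynomial (Fin m) A) ^ (nn j0 + 1)),
                    if_pos (Finset.mem_univ _)]
          have hmkpow : Ideal.Quotient.mk I ((X j0 : MvPolynomial (Fin m) A) ^ (nn j0 + 1))
              = Ideal.Quotient.mk I (∑ i, cc j0 i * piPoly π i) :=
            Ideal.Quotient.eq.mpr (by rw [hIdef]; exact hrel j0)
          have hmain : Ideal.Quotient.mk I (∏ j, (X j : MvPolynomial (Fin m) A) ^ e j)
              = ∑ i, (X i : MvPolynomial (Fin (k+1)) A) •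
                  Ideal.Quotient.mk I (cc j0 i * ∏ j, (X j : MvPolynomial (Fin m) A) ^ e' j) := by
            rw [hsplit, map_mul, hmkpow, map_sum, Finset.mul_sum]
            apply Finset.sum_congr rfl
            intro i _
            rw [← hXsmul, map_mul, map_mul]
            ring
          rw [hmain]
          apply Submodule.sum_mem
          intro i _
          apply Submodule.smul_mem
          have hprod_deg : (∏ j, (X j : MvPolynomial (Fin m) A) ^ e' j).totalDegree
              ≤ ∑ j, e' j :=
            le_trans (totalDegree_finset_prod _ _)
              (Finset.sum_le_sum fun j _ => le_trans (totalDegree_pow _ _)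
                (by rw [totalDegree_X, mul_one]))
          have hejN : nn j0 + 1 ≤ ∑ j, e j :=
            le_trans (by omega) (Finset.single_le_sum (f := e) (fun j _ => Nat.zero_le _)
              (Finset.mem_univ j0))
          have hdeg2 : (cc j0 i * ∏ j, (X j : MvPolynomial (Fin m) A) ^ e' j).totalDegree
              ≤ N - 1 := by
            refine le_trans (totalDegree_mul _ _) ?_
            have := hdeg j0 i
            omega
          exact IH (N - 1) (by omega) _ hdeg2
      intro q hq
      have hqsum : Ideal.Quotient.mk I q
          = ∑ d ∈ q.support, Ideal.Quotient.mk I (monomial d (coeff d q)) := by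
        conv_lhs => rw [q.as_sum]
        rw [map_sum]
      rw [hqsum]
      apply Submodule.sum_mem
      intro d hd
      rw [monomial_eq]
      have hprod : (d.prod fun i e => (X i : MvPolynomial (Fin m) A) ^ e)
          = ∏ j, (X j : MvPolynomial (Fin m) A) ^ d j :=
        (Finsupp.prod_pow d _)
      rw [hprod, map_mul, hCsmul]
      apply Submodule.smul_mem
      apply mono
      have h1 : (∑ j, d j) = d.sum fun _ n => n := by
        rw [Finsupp.sum_fintype]
        intro j; rfl
      rw [h1]
      exact le_trans (le_totalDegree hd) hq
  -- module finiteness and integrality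
  haveI hfin : Module.Finite (MvPolynomial (Fin (k+1)) A) (MvPolynomial (Fin m) A ⧸ I) := by
    constructor
    refine ⟨gens, le_antisymm le_top ?_⟩
    intro b _
    obtain ⟨q, rfl⟩ := Ideal.Quotient.mk_surjective b
    exact key q.totalDegree q le_rfl
  haveI hint : Algebra.IsIntegral (MvPolynomial (Fin (k+1)) A) (MvPolynomial (Fin m) A ⧸ I) :=
    Algebra.IsIntegral.of_finite _ _
  -- lying over
  have hkerle : RingHom.ker (algebraMap (MvPolynomial (Fin (k+1)) A)
      (MvPolynomial (Fin m) A ⧸ I))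
      ≤ vanishingIdeal A ({0} : Set (Fin (k+1) → A)) := by
    intro q hq
    rw [RingHom.mem_ker, halgmap] at hq
    have hq2 : aeval (piPoly π) q ∈ I := Ideal.Quotient.eq_zero_iff_mem.mp hq
    rw [mem_vanishingIdeal_singleton_iff]
    apply h0
    rintro y ⟨v, hv, rfl⟩
    have := (mem_vanishingIdeal_iff.mp hq2) v hv
    rw [aeval_eq_eval, eval_aeval'] at this
    have hfun : (fun i => eval v (piPoly π i)) = π v := funext fun i => eval_piPoly π v i
    rw [hfun] at this
    exact this
  obtain ⟨P, hPmax, hPcomap⟩ :=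
    Ideal.exists_ideal_over_maximal_of_isIntegral
      (vanishingIdeal A ({0} : Set (Fin (k+1) → A))) hkerle
  haveI := hPmax
  haveI hNmax : (P.comap (Ideal.Quotient.mk I)).IsMaximal :=
    Ideal.comap_isMaximal_of_surjective _ Ideal.Quotient.mk_surjective
  obtain ⟨v, hv⟩ :=
    (isMaximal_iff_eq_vanishingIdeal_singleton (I := P.comap (Ideal.Quotient.mk I))).mp hNmax
  have hIleN : ∀ p ∈ I, p ∈ P.comap (Ideal.Quotient.mk I) := by
    intro p hp
    show Ideal.Quotient.mk I p ∈ P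
    rw [Ideal.Quotient.eq_zero_iff_mem.mpr hp]
    exact P.zero_mem
  have hvV : v ∈ V := by
    obtain ⟨T, hT⟩ := hVc
    rw [hT]
    intro p hp
    have hpI : p ∈ I := by
      rw [hIdef, mem_vanishingIdeal_iff]
      intro x hx
      rw [hT] at hx
      exact hx p hp
    have := hIleN p hpI
    rw [hv, mem_vanishingIdeal_singleton_iff] at this
    exact this
  have hπv : π v = 0 := by
    funext i
    have hXi : (X i : MvPolynomial (Fin (k+1)) A)
        ∈ vanishingIdeal A ({0} : Set (Fin (k+1) → A)) := by
      rw [mem_vanishingIdeal_singleton_iff]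
      simp
    rw [← hPcomap] at hXi
    have hφXi : φ (X i) ∈ P := hXi
    have : Ideal.Quotient.mk I (piPoly π i) ∈ P := by
      have : φ (X i) = Ideal.Quotient.mk I (piPoly π i) := by
        show (Ideal.Quotient.mk I) (aeval (piPoly π) (X i)) = _
        rw [aeval_X]
      rwa [this] at hφXi
    have hmem : piPoly π i ∈ P.comap (Ideal.Quotient.mk I) := this
    rw [hv, mem_vanishingIdeal_singleton_iff, aeval_eq_eval] at hmem
    rw [← eval_piPoly π v i, hmem]
    rfl
  exact haff v hvV hπv

/-- If the projective closures of an affine variety `V` (not containing the origin) and of the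
kernel `W` of a surjective linear map `π : A^m → A^(k+1)` are disjoint, then the origin of
`A^(k+1)` is not in the Zariski closure of `π(V)`. -/
theorem origin_not_in_closure_of_proj_disjoint [IsAlgClosed A] {k : ℕ}
    (V : Set (Fin m → A)) (hV : IsZVariety V) (hO : (0 : Fin m → A) ∉ V)
    (π : (Fin m → A) →ₗ[A] (Fin (k + 1) → A)) (hπ : Function.Surjective π)
    (hdisj : projClosure V ∩ projClosure (LinearMap.ker π : Set (Fin m → A)) = ∅) :
    (0 : Fin (k + 1) → A) ∉ zClosure (π '' V) :=
  main_thm V hV.1 π hdisj
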